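/- Let n ≥ 1, let J = diag(−1, 1, …, 1) and η(x,y) = xᵀ J y be the Minkowski bilinear form on ℝ^{n+1}. Let K be a compact subgroup of GL(ℝ^{n+1}) such that every g ∈ K satisfies η(gx, gy) = η(x,y) for all x, y. Then there exists a linear subspace W of ℝ^{n+1} with W ≠ 0 and W ≠ ℝ^{n+1} that is invariant under every element of K. In particular, a precompact group of Lorentz transformations never acts irreducibly on ℝ^{n+1}. -/

import Mathlib

open Matrix MeasureTheory

/-- The Minkowski matrix `diag (-1, 1, ..., 1)` on `ℝ^{n+1}`. -/
noncomputable def minkMat (n : ℕ) : Matrix (Fin (n + 1)) (Fin (n + 1)) ℝ :=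
  Matrix.diagonal (fun i => if i = 0 then (-1 : ℝ) else 1)

/-- The Minkowski bilinear form `η(x, y) = xᵀ J y` of signature `(1, n)`. -/
noncomputable def minkForm (n : ℕ) (x y : Fin (n + 1) → ℝ) : ℝ :=
  x ⬝ᵥ (minkMat n).mulVec y

private lemma entry_eq' {m : ℕ} (M : Matrix (Fin m) (Fin m) ℝ) (i j : Fin m) :
    M i j = Pi.single i 1 ⬝ᵥ M *ᵥ Pi.single j 1 := by
  rw [Matrix.mulVec_single, single_dotProduct]
  simp

private lemma conj_form' {m : ℕ} (A M : Matrix (Fin m) (Fin m) ℝ) (x y : Fin m → ℝ) :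
    x ⬝ᵥ (Aᵀ * M * A) *ᵥ y = (A *ᵥ x) ⬝ᵥ M *ᵥ (A *ᵥ y) := by
  rw [← Matrix.mulVec_mulVec, ← Matrix.mulVec_mulVec, Matrix.dotProduct_mulVec,
    Matrix.vecMul_transpose]

private lemma single_ne_zero' {m : ℕ} (i : Fin m) : (Pi.single i 1 : Fin m → ℝ) ≠ 0 := by
  intro h
  have := congrFun h i
  rw [Pi.single_eq_same] at this
  exact one_ne_zero this

theorem exists_invariant_posdef (m : ℕ) (K : Subgroup (GL (Fin m) ℝ))
    (hcpt : IsCompact (K : Set (GL (Fin m) ℝ))) :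
    ∃ P : Matrix (Fin m) (Fin m) ℝ, P.PosDef ∧
      ∀ g ∈ K, (↑g)ᵀ * P * (↑g : Matrix (Fin m) (Fin m) ℝ) = P := by
  haveI : CompactSpace ↥K := isCompact_iff_compactSpace.mp hcpt
  letI : MeasurableSpace ↥K := borel _
  haveI : BorelSpace ↥K := ⟨rfl⟩
  letI : NormedAddCommGroup (Matrix (Fin m) (Fin m) ℝ) := Matrix.normedAddCommGroup
  letI : NormedSpace ℝ (Matrix (Fin m) (Fin m) ℝ) := Matrix.normedSpace
  haveI : CompleteSpace (Matrix (Fin m) (Fin m) ℝ) := FiniteDimensional.complete ℝ _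
  set μ : Measure ↥K := (MeasureTheory.Measure.haar).inv with hμ
  haveI : μ.IsMulRightInvariant := inferInstance
  have hμuniv : μ Set.univ = (MeasureTheory.Measure.haar (G := ↥K)) Set.univ := by
    rw [hμ, Measure.inv_apply, Set.inv_univ]
  haveI : IsFiniteMeasure μ := ⟨by rw [hμuniv]; exact isCompact_univ.measure_lt_top⟩
  have hμpos : 0 < μ Set.univ := by
    rw [hμuniv]; exact isOpen_univ.measure_pos _ Set.univ_nonempty
  -- the averaged matrix
  set A : ↥K → Matrix (Fin m) (Fin m) ℝ := fun g => ((g : GL (Fin m) ℝ) : Matrix (Fin m) (Fin m) ℝ) with hA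
  have hAcont : Continuous A := Units.continuous_val.comp continuous_subtype_val
  have hAmul : ∀ g h : ↥K, A (g * h) = A g * A h := fun g h => rfl
  set f : ↥K → Matrix (Fin m) (Fin m) ℝ := fun g => (A g)ᵀ * A g with hf
  have hfcont : Continuous f := hAcont.matrix_transpose.matrix_mul hAcont
  have hfint : @Integrable _ PseudoMetricSpace.toUniformSpace.toTopologicalSpace
      SeminormedAddGroup.toContinuousENorm _ _ f μ := by
    exact hfcont.integrable_of_hasCompactSupport (μ := μ)
      (IsCompact.of_isClosed_subset isCompact_univ (isClosed_tsupport f) (Set.subset_univ _))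
  set P : Matrix (Fin m) (Fin m) ℝ := ∫ g, f g ∂μ with hP
  have key : ∀ {F : Type} [NormedAddCommGroup F] [NormedSpace ℝ F] [CompleteSpace F]
      (L : Matrix (Fin m) (Fin m) ℝ →ₗ[ℝ] F),
      (LinearMap.toContinuousLinearMap L) P = ∫ g, L (f g) ∂μ := fun L =>
    (ContinuousLinearMap.integral_comp_comm (LinearMap.toContinuousLinearMap L) hfint).symm
  -- transpose
  have hPsymm : Pᵀ = P := by
    have h1 := key ((Matrix.transposeLinearEquiv (Fin m) (Fin m) ℝ ℝ).toLinearMap)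
    have h2 : Pᵀ = ∫ g, (f g)ᵀ ∂μ := h1
    rw [h2]
    have : ∀ g : ↥K, (f g)ᵀ = f g := by
      intro g; rw [hf]; simp [Matrix.transpose_mul, Matrix.mul_assoc]
    simp only [this]
    rfl
  -- invariance
  have hPinv : ∀ a : ↥K, (A a)ᵀ * P * A a = P := by
    intro a
    let L : Matrix (Fin m) (Fin m) ℝ →ₗ[ℝ] Matrix (Fin m) (Fin m) ℝ :=
      { toFun := fun X => (A a)ᵀ * X * A a
        map_add' := by intro X Y; beta_reduce; rw [Matrix.mul_add, Matrix.add_mul]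
        map_smul' := by intro c X; simp only [RingHom.id_apply]; rw [Matrix.mul_smul, Matrix.smul_mul] }
    have h1 := key L
    have h2 : (A a)ᵀ * P * A a = ∫ g, (A a)ᵀ * f g * A a ∂μ := h1
    rw [h2]
    have h3 : ∀ g : ↥K, (A a)ᵀ * f g * A a = f (g * a) := by
      intro g
      show (A a)ᵀ * ((A g)ᵀ * A g) * A a = (A (g * a))ᵀ * A (g * a)
      rw [hAmul, Matrix.transpose_mul]
      noncomm_ring
    simp only [h3]
    rw [integral_mul_right_eq_self f a]
  -- positivity
  have hPpos : ∀ x : Fin m → ℝ, x ≠ 0 → 0 < x ⬝ᵥ P *ᵥ x := by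
    intro x hx
    let L : Matrix (Fin m) (Fin m) ℝ →ₗ[ℝ] ℝ :=
      { toFun := fun X => x ⬝ᵥ X *ᵥ x
        map_add' := by intro X Y; simp [Matrix.add_mulVec]
        map_smul' := by intro c X; simp [Matrix.smul_mulVec] }
    have h1 := key L
    have h2 : x ⬝ᵥ P *ᵥ x = ∫ g, x ⬝ᵥ f g *ᵥ x ∂μ := h1
    have h3 : ∀ g : ↥K, x ⬝ᵥ f g *ᵥ x = (A g *ᵥ x) ⬝ᵥ (A g *ᵥ x) := by
      intro g
      show x ⬝ᵥ ((A g)ᵀ * A g) *ᵥ x = _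
      rw [← Matrix.mulVec_mulVec, Matrix.dotProduct_mulVec, Matrix.vecMul_transpose]
    have hAx : ∀ g : ↥K, A g *ᵥ x ≠ 0 := by
      intro g hzero
      apply hx
      have : A g⁻¹ *ᵥ (A g *ᵥ x) = x := by
        rw [Matrix.mulVec_mulVec, ← hAmul, inv_mul_cancel]
        show (((1 : K) : GL (Fin m) ℝ) : Matrix (Fin m) (Fin m) ℝ) *ᵥ x = x
        simp
      rw [← this, hzero, Matrix.mulVec_zero]
    have h4 : ∀ g : ↥K, 0 < x ⬝ᵥ f g *ᵥ x := by
      intro g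
      rw [h3]
      rcases (Finset.sum_nonneg fun i _ => mul_self_nonneg ((A g *ᵥ x) i)).lt_or_eq with h | h
      · exact h
      · exact absurd (dotProduct_self_eq_zero.mp h.symm) (hAx g)
    set h : ↥K → ℝ := fun g => x ⬝ᵥ f g *ᵥ x with hh
    have hhcont : Continuous h := (continuous_const.dotProduct
      (hfcont.matrix_mulVec continuous_const))
    have hhint : Integrable h μ := hhcont.integrable_of_hasCompactSupport
      (IsCompact.of_isClosed_subset isCompact_univ (isClosed_tsupport h) (Set.subset_univ _))
    obtain ⟨g₀, -, hg₀⟩ := isCompact_univ.exists_isMinOn Set.univ_nonempty hhcont.continuousOn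
    have hmin : ∀ g : ↥K, h g₀ ≤ h g := fun g => hg₀ (Set.mem_univ g)
    have hlow : (μ Set.univ).toReal • h g₀ ≤ ∫ g, h g ∂μ := by
      rw [← measureReal_def, ← integral_const]
      exact integral_mono (integrable_const _) hhint hmin
    have : 0 < (μ Set.univ).toReal • h g₀ :=
      mul_pos (ENNReal.toReal_pos hμpos.ne' (measure_ne_top μ _)) (h4 g₀)
    rw [h2]
    exact lt_of_lt_of_le this hlow
  refine ⟨P, Matrix.PosDef.of_dotProduct_mulVec_pos ?_ fun x hx => ?_, fun g hg => hPinv ⟨g, hg⟩⟩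
  · show Pᴴ = P
    rw [Matrix.conjTranspose]
    simpa [Matrix.map] using (show (Matrix.of fun i j => P j i) = P from hPsymm)
  · simpa using hPpos x hx
/-- A compact group of Lorentz transformations of `ℝ^{1,n}` never acts irreducibly:
it preserves a nontrivial proper subspace. -/
theorem compact_lorentz_subgroup_not_irreducible (n : ℕ) (hn : 1 ≤ n)
    (K : Subgroup (GL (Fin (n + 1)) ℝ))
    (hcpt : IsCompact (K : Set (GL (Fin (n + 1)) ℝ)))
    (hK : ∀ g ∈ K, ∀ x y : Fin (n + 1) → ℝ,
      minkForm n ((g : Matrix (Fin (n + 1)) (Fin (n + 1)) ℝ).mulVec x)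
        ((g : Matrix (Fin (n + 1)) (Fin (n + 1)) ℝ).mulVec y) = minkForm n x y) :
    ∃ W : Submodule ℝ (Fin (n + 1) → ℝ), W ≠ ⊥ ∧ W ≠ ⊤ ∧
      ∀ g ∈ K, ∀ w ∈ W, (g : Matrix (Fin (n + 1)) (Fin (n + 1)) ℝ).mulVec w ∈ W := by
  set J : Matrix (Fin (n + 1)) (Fin (n + 1)) ℝ := minkMat n with hJdef
  have hJsymm : Jᵀ = J := by rw [hJdef, minkMat, Matrix.diagonal_transpose]
  -- the Lorentz condition, matrix form
  have hJlor : ∀ g ∈ K, ((g : Matrix (Fin (n+1)) (Fin (n+1)) ℝ))ᵀ * J *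
      (g : Matrix (Fin (n+1)) (Fin (n+1)) ℝ) = J := by
    intro g hg
    ext i j
    have h := hK g hg (Pi.single i 1) (Pi.single j 1)
    rw [minkForm, minkForm] at h
    rw [entry_eq' ((g : Matrix (Fin (n+1)) (Fin (n+1)) ℝ)ᵀ * J * (g : Matrix (Fin (n+1)) (Fin (n+1)) ℝ)) i j, entry_eq' J i j, conj_form']
    exact h
  -- the invariant positive definite matrix
  obtain ⟨P, hPpd, hPinv⟩ := exists_invariant_posdef (n + 1) K hcpt
  have hPpos : ∀ x : Fin (n+1) → ℝ, x ≠ 0 → 0 < x ⬝ᵥ P *ᵥ x := by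
    intro x hx
    have := hPpd.dotProduct_mulVec_pos hx
    simpa using this
  -- square root of P
  open scoped MatrixOrder in
  set S : Matrix (Fin (n+1)) (Fin (n+1)) ℝ := CFC.sqrt P with hSdef
  open scoped MatrixOrder in
  have hS2 : S * S = P := CFC.sqrt_mul_sqrt_self P hPpd.posSemidef.nonneg
  have hSsymm : Sᵀ = S := by
    open scoped MatrixOrder in
    have h := (CFC.sqrt_nonneg P).posSemidef.1
    rwa [Matrix.IsHermitian, Matrix.conjTranspose_eq_transpose_of_trivial] at h
  have hSdet : IsUnit S.det := by
    have hdet : S.det * S.det = P.det := by rw [← Matrix.det_mul, hS2]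
    have hPdet : 0 < P.det := hPpd.det_pos
    refine isUnit_iff_ne_zero.mpr fun h0 => ?_
    rw [h0, mul_zero] at hdet
    exact hPdet.ne hdet
  have hS1 : S⁻¹ * S = 1 := Matrix.nonsing_inv_mul S hSdet
  have hS1' : S * S⁻¹ = 1 := Matrix.mul_nonsing_inv S hSdet
  have hSinvsymm : (S⁻¹)ᵀ = S⁻¹ := by rw [Matrix.transpose_nonsing_inv, hSsymm]
  -- the symmetric matrix N = S⁻¹ J S⁻¹ and an eigenvalue
  set N : Matrix (Fin (n+1)) (Fin (n+1)) ℝ := S⁻¹ * J * S⁻¹ with hNdef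
  have hN : N.IsHermitian := by
    rw [Matrix.IsHermitian, Matrix.conjTranspose_eq_transpose_of_trivial, hNdef,
      Matrix.transpose_mul, Matrix.transpose_mul, hSinvsymm, hJsymm, Matrix.mul_assoc]
  set ev : ℝ := hN.eigenvalues 0 with hevdef
  set u : Fin (n+1) → ℝ := ⇑(hN.eigenvectorBasis 0) with hudef
  have hu : N *ᵥ u = ev • u := hN.mulVec_eigenvectorBasis 0
  have hu0 : u ≠ 0 := by
    intro h
    have : hN.eigenvectorBasis 0 = 0 := by
      apply_fun (fun z => (z : EuclideanSpace ℝ (Fin (n+1)))) using fun a b hab => hab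
      ext i
      exact congrFun h i
    exact hN.eigenvectorBasis.orthonormal.ne_zero 0 this
  -- the invariant subspace
  set X : Matrix (Fin (n+1)) (Fin (n+1)) ℝ := J - ev • P with hXdef
  refine ⟨LinearMap.ker X.mulVecLin, ?_, ?_, ?_⟩
  · -- not ⊥ : v = S⁻¹ *ᵥ u belongs to it
    rw [Submodule.ne_bot_iff]
    refine ⟨S⁻¹ *ᵥ u, ?_, ?_⟩
    · rw [LinearMap.mem_ker, Matrix.mulVecLin_apply, hXdef, Matrix.sub_mulVec]
      have c1 : J *ᵥ (S⁻¹ *ᵥ u) = S *ᵥ (N *ᵥ u) := by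
        rw [Matrix.mulVec_mulVec, Matrix.mulVec_mulVec, hNdef, ← Matrix.mul_assoc,
          ← Matrix.mul_assoc, hS1', Matrix.one_mul]
      have c2 : P *ᵥ (S⁻¹ *ᵥ u) = S *ᵥ u := by
        rw [Matrix.mulVec_mulVec, ← hS2, Matrix.mul_assoc, hS1', Matrix.mul_one]
      rw [Matrix.smul_mulVec, c1, c2, hu, Matrix.mulVec_smul, sub_self]
    · intro h
      apply hu0
      have : S *ᵥ (S⁻¹ *ᵥ u) = u := by
        rw [Matrix.mulVec_mulVec, hS1', Matrix.one_mulVec]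
      rw [← this, h, Matrix.mulVec_zero]
  · -- not ⊤
    intro htop
    have hX0 : X = 0 := by
      ext i j
      rw [entry_eq' X i j]
      have : (Pi.single j 1 : Fin (n+1) → ℝ) ∈ LinearMap.ker X.mulVecLin := by
        rw [htop]; trivial
      rw [LinearMap.mem_ker, Matrix.mulVecLin_apply] at this
      rw [this, dotProduct_zero, Matrix.zero_apply]
    have hJP : J = ev • P := by
      have := sub_eq_zero.mp (hXdef ▸ hX0)
      exact this
    set i1 : Fin (n + 1) := ⟨1, by omega⟩ with hi1
    have hi10 : i1 ≠ 0 := by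
      intro h
      have := congrArg Fin.val h
      simp [hi1] at this
    have hJ00 : J 0 0 = -1 := by
      rw [hJdef, minkMat, Matrix.diagonal_apply_eq]; simp
    have hJ11 : J i1 i1 = 1 := by
      rw [hJdef, minkMat, Matrix.diagonal_apply_eq]; simp [hi10]
    have hP00 : 0 < P 0 0 := by
      rw [entry_eq' P 0 0]; exact hPpos _ (single_ne_zero' 0)
    have hP11 : 0 < P i1 i1 := by
      rw [entry_eq' P i1 i1]; exact hPpos _ (single_ne_zero' i1)
    have e1 : (-1 : ℝ) = ev * P 0 0 := by
      rw [← hJ00, hJP]; simp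
    have e2 : (1 : ℝ) = ev * P i1 i1 := by
      rw [← hJ11, hJP]; simp
    nlinarith
  · -- invariance
    intro g hg w hw
    rw [LinearMap.mem_ker, Matrix.mulVecLin_apply] at hw ⊢
    set B : Matrix (Fin (n+1)) (Fin (n+1)) ℝ := (g : Matrix (Fin (n+1)) (Fin (n+1)) ℝ) with hB
    set C : Matrix (Fin (n+1)) (Fin (n+1)) ℝ := ((g⁻¹ : GL (Fin (n+1)) ℝ) :
      Matrix (Fin (n+1)) (Fin (n+1)) ℝ) with hC
    have hBC : B * C = 1 := by
      rw [hB, hC, ← Units.val_mul, mul_inv_cancel, Units.val_one]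
    have hXg : Bᵀ * X * B = X := by
      rw [hXdef, Matrix.mul_sub, Matrix.sub_mul, Matrix.mul_smul, Matrix.smul_mul,
        hJlor g hg, hPinv g hg]
    have hXB : X * B = Cᵀ * X := by
      have h1 : Cᵀ * (Bᵀ * X * B) = Cᵀ * X := by rw [hXg]
      have h2 : Cᵀ * (Bᵀ * X * B) = X * B := by
        rw [← Matrix.mul_assoc, ← Matrix.mul_assoc, ← Matrix.transpose_mul, hBC,
          Matrix.transpose_one, Matrix.one_mul]
      rw [← h2, h1]
    calc X *ᵥ (B *ᵥ w) = (X * B) *ᵥ w := by rw [Matrix.mulVec_mulVec]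
      _ = Cᵀ *ᵥ (X *ᵥ w) := by rw [hXB, Matrix.mulVec_mulVec]
      _ = 0 := by rw [hw, Matrix.mulVec_zero]
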